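/- For all m, n ≥ 1, the distinguishing number of the graph m·Kₙ (the disjoint union of m copies of the complete graph on n vertices, i.e., the simple graph on Fin m × Fin n in which (i,a) is adjacent to (j,b) iff i = j and a ≠ b) equals the least k ∈ ℕ such that the binomial coefficient C(k,n) ≥ m. -/

import Mathlib

/-- The graph `m·Kₙ`: the disjoint union of `m` copies of the complete graph `Kₙ`,
realized on the vertex set `Fin m × Fin n`, where `(i,a)` is adjacent to `(j,b)`
iff `i = j` and `a ≠ b`. -/
def mCopiesKn (m n : ℕ) : SimpleGraph (Fin m × Fin n) where
  Adj x y := x.1 = y.1 ∧ x.2 ≠ y.2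
  symm := ⟨fun x y ⟨h1, h2⟩ => ⟨h1.symm, h2.symm⟩⟩
  loopless := ⟨fun x ⟨_, h⟩ => h rfl⟩

/-- A "shear" automorphism of `m·Kₙ`: permute the copies by `σ` and apply a
permutation `f i` inside the copy `i`. -/
def shearIso (m n : ℕ) (σ : Fin m ≃ Fin m) (f : Fin m → Fin n ≃ Fin n) :
    mCopiesKn m n ≃g mCopiesKn m n where
  toEquiv := Equiv.prodShear σ f
  map_rel_iff' := by
    rintro ⟨j₁, x⟩ ⟨j₂, y⟩
    show (σ j₁ = σ j₂ ∧ f j₁ x ≠ f j₂ y) ↔ (j₁ = j₂ ∧ x ≠ y)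
    constructor
    · rintro ⟨h1, h2⟩
      have hj : j₁ = j₂ := σ.injective h1
      subst hj
      exact ⟨rfl, fun hh => h2 (by rw [hh])⟩
    · rintro ⟨rfl, h2⟩
      exact ⟨rfl, fun hh => h2 ((f j₁).injective hh)⟩

lemma shearIso_apply (m n : ℕ) (σ : Fin m ≃ Fin m) (f : Fin m → Fin n ≃ Fin n)
    (v : Fin m × Fin n) : (shearIso m n σ f) v = (σ v.1, f v.1 v.2) := rfl

/-- For `m, n ≥ 1`, the distinguishing number of `m·Kₙ` equals the
least `k` such that `C(k,n) ≥ m`. -/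
theorem distinguishing_number_mKn (m n : ℕ) (hm : 1 ≤ m) (hn : 1 ≤ n) :
    sInf {k : ℕ | ∃ c : Fin m × Fin n → Fin k,
        ∀ g : mCopiesKn m n ≃g mCopiesKn m n,
          (∀ v, c (g v) = c v) → ∀ v, g v = v}
      = sInf {k : ℕ | m ≤ Nat.choose k n} := by
  classical
  have hset : {k : ℕ | ∃ c : Fin m × Fin n → Fin k,
        ∀ g : mCopiesKn m n ≃g mCopiesKn m n,
          (∀ v, c (g v) = c v) → ∀ v, g v = v}
      = {k : ℕ | m ≤ Nat.choose k n} := by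
    ext k
    simp only [Set.mem_setOf_eq]
    constructor
    · rintro ⟨c, hc⟩
      -- Step A : each copy is colored injectively
      have hinj : ∀ i : Fin m, Function.Injective (fun a => c (i, a)) := by
        intro i a b hab
        by_contra hne
        simp only at hab
        set f : Fin m → Fin n ≃ Fin n :=
          fun j => if j = i then Equiv.swap a b else Equiv.refl _ with hf
        set g₀ := shearIso m n (Equiv.refl _) f with hg₀
        have hcol : ∀ v, c (g₀ v) = c v := by
          rintro ⟨j, x⟩
          rw [shearIso_apply]
          simp only [Equiv.refl_apply]
          by_cases hj : j = i
          · subst hj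
            simp only [hf, if_pos rfl]
            rcases eq_or_ne x a with rfl | hxa
            · rw [Equiv.swap_apply_left]; exact hab.symm
            rcases eq_or_ne x b with rfl | hxb
            · rw [Equiv.swap_apply_right]; exact hab
            · rw [Equiv.swap_apply_of_ne_of_ne hxa hxb]
          · simp [hf, hj]
        have := hc g₀ hcol (i, a)
        rw [shearIso_apply] at this
        simp only [Equiv.refl_apply, hf, if_pos rfl, Equiv.swap_apply_left] at this
        exact hne (Prod.ext_iff.mp this).2.symm
      -- Step B : the color sets of the copies are pairwise distinct
      let F : Fin m → {s : Finset (Fin k) // s.card = n} := fun i =>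
        ⟨Finset.image (fun a => c (i, a)) Finset.univ, by
          rw [Finset.card_image_of_injective _ (hinj i), Finset.card_univ, Fintype.card_fin]⟩
      have hF : Function.Injective F := by
        intro i j hij
        by_contra hne
        have hs : Finset.image (fun a => c (i, a)) Finset.univ
            = Finset.image (fun a => c (j, a)) Finset.univ := congrArg Subtype.val hij
        have hex : ∀ a : Fin n, ∃ b : Fin n, c (j, b) = c (i, a) := by
          intro a
          have : c (i, a) ∈ Finset.image (fun a => c (j, a)) Finset.univ := by
            rw [← hs]; exact Finset.mem_image_of_mem _ (Finset.mem_univ a)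
          simpa using this
        have hex' : ∀ b : Fin n, ∃ a : Fin n, c (i, a) = c (j, b) := by
          intro b
          have : c (j, b) ∈ Finset.image (fun a => c (i, a)) Finset.univ := by
            rw [hs]; exact Finset.mem_image_of_mem _ (Finset.mem_univ b)
          simpa using this
        let p : Fin n → Fin n := fun a => Classical.choose (hex a)
        have hp : ∀ a, c (j, p a) = c (i, a) := fun a => Classical.choose_spec (hex a)
        let q : Fin n → Fin n := fun b => Classical.choose (hex' b)
        have hq : ∀ b, c (i, q b) = c (j, b) := fun b => Classical.choose_spec (hex' b)
        have hqp : ∀ a, q (p a) = a := by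
          intro a
          apply hinj i
          show c (i, q (p a)) = c (i, a)
          rw [hq, hp]
        have hpq : ∀ b, p (q b) = b := by
          intro b
          apply hinj j
          show c (j, p (q b)) = c (j, b)
          rw [hp, hq]
        let π : Fin n ≃ Fin n := ⟨p, q, hqp, hpq⟩
        set f : Fin m → Fin n ≃ Fin n :=
          fun l => if l = i then π else if l = j then π.symm else Equiv.refl _ with hf
        set g₀ := shearIso m n (Equiv.swap i j) f with hg₀
        have hcol : ∀ v, c (g₀ v) = c v := by
          rintro ⟨l, x⟩
          rw [shearIso_apply]
          by_cases hl : l = i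
          · subst hl
            simp only [hf, if_pos rfl, Equiv.swap_apply_left]
            exact hp x
          by_cases hl' : l = j
          · subst hl'
            simp only [hf, if_neg hl, if_pos rfl, Equiv.swap_apply_right]
            exact hq x
          · simp only [hf, if_neg hl, if_neg hl', Equiv.refl_apply,
              Equiv.swap_apply_of_ne_of_ne hl hl']
        have a₀ : Fin n := ⟨0, hn⟩
        have := hc g₀ hcol (i, a₀)
        rw [shearIso_apply] at this
        have h1 : Equiv.swap i j i = i := (Prod.ext_iff.mp this).1
        rw [Equiv.swap_apply_left] at h1
        exact hne h1.symm
      calc m = Fintype.card (Fin m) := (Fintype.card_fin m).symm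
        _ ≤ Fintype.card {s : Finset (Fin k) // s.card = n} :=
            Fintype.card_le_of_injective F hF
        _ = Nat.choose k n := by rw [Fintype.card_finset_len, Fintype.card_fin]
    · intro hk
      -- choose m distinct n-element subsets of Fin k
      have hcard : Fintype.card (Fin m) ≤ Fintype.card {s : Finset (Fin k) // s.card = n} := by
        rw [Fintype.card_fin, Fintype.card_finset_len, Fintype.card_fin]; exact hk
      obtain ⟨G⟩ := Function.Embedding.nonempty_of_card_le hcard
      have hGcard : ∀ i : Fin m, Fintype.card ((G i).1 : Finset (Fin k)) = n := by
        intro i; rw [Fintype.card_coe]; exact (G i).2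
      let e : ∀ i : Fin m, ((G i).1 : Finset (Fin k)) ≃ Fin n :=
        fun i => Fintype.equivFinOfCardEq (hGcard i)
      let c : Fin m × Fin n → Fin k := fun v => ((e v.1).symm v.2 : Fin k)
      have hmem : ∀ i a, c (i, a) ∈ (G i).1 := fun i a => Finset.coe_mem _
      have cinj : ∀ i : Fin m, Function.Injective (fun a => c (i, a)) := by
        intro i a b hab
        simp only [c] at hab
        have : (e i).symm a = (e i).symm b := Subtype.ext hab
        exact (e i).symm.injective this
      refine ⟨c, fun g hg => ?_⟩
      have a₀ : Fin n := ⟨0, hn⟩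
      set σ : Fin m → Fin m := fun i => (g (i, a₀)).1 with hσdef
      have hσ : ∀ i a, (g (i, a)).1 = σ i := by
        intro i a
        rcases eq_or_ne a a₀ with rfl | ha
        · rfl
        · have hadj : (mCopiesKn m n).Adj (i, a) (i, a₀) := ⟨rfl, ha⟩
          have := g.map_rel_iff.mpr hadj
          exact this.1
      have hsub : ∀ i : Fin m, (G i).1 ⊆ (G (σ i)).1 := by
        intro i x hx
        have ha : ∃ a : Fin n, c (i, a) = x := by
          refine ⟨e i ⟨x, hx⟩, ?_⟩
          simp only [c, Equiv.symm_apply_apply]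
        obtain ⟨a, ha⟩ := ha
        have h1 : c (g (i, a)) = c (i, a) := hg (i, a)
        have h2 : g (i, a) = (σ i, (g (i, a)).2) := Prod.ext (hσ i a) rfl
        rw [h2] at h1
        rw [← ha, ← h1]
        exact hmem _ _
      have hσid : ∀ i, σ i = i := by
        intro i
        have hcards : ((G (σ i)).1).card ≤ ((G i).1).card := by
          rw [(G i).2, (G (σ i)).2]
        have := Finset.eq_of_subset_of_card_le (hsub i) hcards
        exact G.injective (Subtype.ext this.symm)
      rintro ⟨i, a⟩
      have h1 : c (g (i, a)) = c (i, a) := hg (i, a)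
      have h2 : g (i, a) = (i, (g (i, a)).2) := Prod.ext ((hσ i a).trans (hσid i)) rfl
      rw [h2] at h1 ⊢
      have : (g (i, a)).2 = a := cinj i h1
      rw [this]
  rw [hset]
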